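/- Let A be an irreducible nonnegative symmetric n×n matrix, R the diagonal matrix of its row sums, and r ≥ 2. If μ(R + (1/(r−1))·A) = (r/(r−1))·μ(A), then all row sums of A are equal. -/

import Mathlib

open Matrix Pointwise

noncomputable def maxEigR {n : ℕ} (A : Matrix (Fin n) (Fin n) ℝ) : ℝ :=
  sSup (spectrum ℝ A)

def Irred {n : ℕ} (A : Matrix (Fin n) (Fin n) ℝ) : Prop :=
  ∀ S : Set (Fin n), S.Nonempty → S ≠ Set.univ → ∃ i ∈ S, ∃ j, j ∉ S ∧ A i j ≠ 0

lemma spec_finite {n : ℕ} {M : Matrix (Fin n) (Fin n) ℝ} (hM : M.IsHermitian) :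
    (spectrum ℝ M).Finite := by
  rw [hM.spectrum_real_eq_range_eigenvalues]
  exact Set.finite_range _

lemma rayleigh_le {n : ℕ} [NeZero n] {M : Matrix (Fin n) (Fin n) ℝ} (hM : M.IsHermitian)
    (v : Fin n → ℝ) : v ⬝ᵥ (M *ᵥ v) ≤ maxEigR M * (v ⬝ᵥ v) := by
  set σ := maxEigR M with hσ
  have hbdd : BddAbove (spectrum ℝ M) := (spec_finite hM).bddAbove
  have hP : (σ • (1 : Matrix (Fin n) (Fin n) ℝ) - M).IsHermitian := by
    unfold Matrix.IsHermitian
    have hMt : Mᵀ = M := by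
      rw [← conjTranspose_eq_transpose_of_trivial]; exact hM.eq
    rw [conjTranspose_eq_transpose_of_trivial, transpose_sub, transpose_smul, transpose_one, hMt]
  have hPsd : (σ • (1 : Matrix (Fin n) (Fin n) ℝ) - M).PosSemidef := by
    apply hP.posSemidef_iff_eigenvalues_nonneg.mpr
    intro i
    have hmem := hP.eigenvalues_mem_spectrum_real i
    have hrw : σ • (1 : Matrix (Fin n) (Fin n) ℝ) - M =
        algebraMap ℝ (Matrix (Fin n) (Fin n) ℝ) σ - M := by
      rw [Algebra.algebraMap_eq_smul_one]
    have hmem2 : hP.eigenvalues i ∈ ({σ} : Set ℝ) - spectrum ℝ M := by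
      rw [spectrum.singleton_sub_eq, ← hrw]; exact hmem
    obtain ⟨a, ha, b, hb, hab⟩ := hmem2
    rw [Set.mem_singleton_iff] at ha
    subst ha
    have hble : b ≤ σ := le_csSup hbdd hb
    rw [← hab]
    simp only [smul_eq_mul, Pi.zero_apply]
    linarith
  have h := hPsd.dotProduct_mulVec_nonneg v
  rw [star_trivial, sub_mulVec, smul_mulVec, one_mulVec, dotProduct_sub,
    dotProduct_smul] at h
  simp only [smul_eq_mul] at h
  linarith

/-- If `μ(R + (1/(r−1))·A) = (r/(r−1))·μ(A)` for an irreducible nonnegative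
symmetric matrix `A`, then all row sums of `A` are equal. -/
theorem stmt3 {n r : ℕ} (hr : 2 ≤ r) (A : Matrix (Fin n) (Fin n) ℝ)
    (hsym : A.IsSymm) (hnonneg : ∀ i j, 0 ≤ A i j) (hirr : Irred A)
    (heq : maxEigR (Matrix.diagonal (fun i => ∑ j, A i j) + ((r : ℝ) - 1)⁻¹ • A) =
      ((r : ℝ) / ((r : ℝ) - 1)) * maxEigR A) :
    ∀ i j : Fin n, ∑ k, A i k = ∑ k, A j k := by
  rcases Nat.eq_zero_or_pos n with hn | hn
  · subst hn; intro i; exact i.elim0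
  haveI : NeZero n := ⟨hn.ne'⟩
  have hA : A.IsHermitian := by
    unfold Matrix.IsHermitian
    rw [conjTranspose_eq_transpose_of_trivial]; exact hsym
  set μ := maxEigR A with hμ
  have hfin : (spectrum ℝ A).Finite := spec_finite hA
  have hnonemp : (spectrum ℝ A).Nonempty := by
    rw [hA.spectrum_real_eq_range_eigenvalues]
    exact Set.range_nonempty _
  have hmem : μ ∈ spectrum ℝ A := hnonemp.csSup_mem hfin
  rw [spectrum.mem_iff] at hmem
  have hdet : (algebraMap ℝ (Matrix (Fin n) (Fin n) ℝ) μ - A).det = 0 := by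
    by_contra hd
    exact hmem ((Matrix.isUnit_iff_isUnit_det _).mpr (Ne.isUnit hd))
  obtain ⟨v, hv0, hv⟩ := (Matrix.exists_mulVec_eq_zero_iff).mpr hdet
  have hev : A *ᵥ v = μ • v := by
    rw [sub_mulVec, Algebra.algebraMap_eq_smul_one, smul_mulVec, one_mulVec] at hv
    have := sub_eq_zero.mp hv
    exact this.symm
  set c : ℝ := ((r : ℝ) - 1)⁻¹ with hc
  have hr1 : (1:ℝ) ≤ (r:ℝ) - 1 := by
    have : (2:ℝ) ≤ (r:ℝ) := by exact_mod_cast hr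
    linarith
  have hrne : (r:ℝ) - 1 ≠ 0 := by linarith
  set B := Matrix.diagonal (fun i => ∑ j, A i j) + c • A with hB
  have hBh : B.IsHermitian := by
    unfold Matrix.IsHermitian
    rw [conjTranspose_eq_transpose_of_trivial, transpose_add, transpose_smul,
      Matrix.diagonal_transpose, hsym]
  have hray := rayleigh_le hBh v
  have hAv : v ⬝ᵥ (A *ᵥ v) = μ * (v ⬝ᵥ v) := by
    rw [hev, dotProduct_smul, smul_eq_mul]
  have hBv : v ⬝ᵥ (B *ᵥ v) = (∑ i, (∑ j, A i j) * v i ^ 2) + c * (μ * (v ⬝ᵥ v)) := by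
    rw [hB, add_mulVec, dotProduct_add, smul_mulVec, dotProduct_smul, smul_eq_mul, hAv]
    congr 1
    rw [dotProduct]
    apply Finset.sum_congr rfl
    intro i _
    rw [mulVec_diagonal]
    ring
  have hfrac : (r : ℝ) / ((r : ℝ) - 1) = 1 + c := by
    rw [hc]; field_simp; ring
  have hkey : (∑ i, (∑ j, A i j) * v i ^ 2) ≤ μ * (v ⬝ᵥ v) := by
    rw [hBv] at hray
    rw [show maxEigR B = ((r : ℝ) / ((r : ℝ) - 1)) * μ from heq, hfrac] at hray
    nlinarith [hray]
  -- Laplacian identity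
  have h1 : ∑ i, ∑ j, A i j * v i ^ 2 = ∑ i, (∑ j, A i j) * v i ^ 2 := by
    apply Finset.sum_congr rfl
    intro i _
    rw [Finset.sum_mul]
  have h3 : ∑ i, ∑ j, A i j * v j ^ 2 = ∑ i, (∑ j, A i j) * v i ^ 2 := by
    rw [Finset.sum_comm]
    apply Finset.sum_congr rfl
    intro j _
    rw [Finset.sum_mul]
    apply Finset.sum_congr rfl
    intro i _
    rw [hsym.apply j i]
  have h2 : ∑ i, ∑ j, A i j * (v i * v j) = v ⬝ᵥ (A *ᵥ v) := by
    rw [dotProduct]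
    apply Finset.sum_congr rfl
    intro i _
    rw [mulVec, dotProduct, Finset.mul_sum]
    apply Finset.sum_congr rfl
    intro j _
    ring
  have hid : ∑ i, ∑ j, A i j * (v i - v j) ^ 2 =
      2 * (∑ i, (∑ j, A i j) * v i ^ 2) - 2 * (v ⬝ᵥ (A *ᵥ v)) := by
    have hexp : ∀ i ∈ Finset.univ, ∀ j ∈ Finset.univ, A i j * (v i - v j) ^ 2 =
        A i j * v i ^ 2 - 2 * (A i j * (v i * v j)) + A i j * v j ^ 2 := by
      intro i _ j _; ring
    calc ∑ i, ∑ j, A i j * (v i - v j) ^ 2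
        = ∑ i, ∑ j, (A i j * v i ^ 2 - 2 * (A i j * (v i * v j)) + A i j * v j ^ 2) := by
          exact Finset.sum_congr rfl fun i hi => Finset.sum_congr rfl (hexp i hi)
      _ = (∑ i, ∑ j, A i j * v i ^ 2) - 2 * (∑ i, ∑ j, A i j * (v i * v j))
            + (∑ i, ∑ j, A i j * v j ^ 2) := by
          simp only [Finset.sum_add_distrib, Finset.sum_sub_distrib, ← Finset.mul_sum]
      _ = _ := by rw [h1, h2, h3]; ring
  have hle : ∑ i, ∑ j, A i j * (v i - v j) ^ 2 ≤ 0 := by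
    rw [hid, hAv]; linarith
  have hterm : ∀ i ∈ Finset.univ, ∀ j ∈ (Finset.univ : Finset (Fin n)),
      0 ≤ A i j * (v i - v j) ^ 2 :=
    fun i _ j _ => mul_nonneg (hnonneg i j) (sq_nonneg _)
  have hzero : ∑ i, ∑ j, A i j * (v i - v j) ^ 2 = 0 :=
    le_antisymm hle (Finset.sum_nonneg fun i hi => Finset.sum_nonneg (hterm i hi))
  have hz : ∀ i j, A i j * (v i - v j) ^ 2 = 0 := by
    intro i j
    have h' := (Finset.sum_eq_zero_iff_of_nonneg
      (fun i hi => Finset.sum_nonneg (hterm i hi))).mp hzero i (Finset.mem_univ i)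
    exact (Finset.sum_eq_zero_iff_of_nonneg (hterm i (Finset.mem_univ i))).mp h' j
      (Finset.mem_univ j)
  have hconn : ∀ i j, A i j ≠ 0 → v i = v j := by
    intro i j hij
    rcases mul_eq_zero.mp (hz i j) with h | h
    · exact absurd h hij
    · exact sub_eq_zero.mp ((pow_eq_zero_iff two_ne_zero).mp h)
  obtain ⟨i₀, hi₀⟩ := Function.ne_iff.mp hv0
  have hi₀' : v i₀ ≠ 0 := hi₀
  have hconst : ∀ i, v i = v i₀ := by
    have hS : {i | v i = v i₀} = Set.univ := by
      by_contra hSne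
      obtain ⟨i, hi, j, hj, hAij⟩ := hirr {i | v i = v i₀} ⟨i₀, rfl⟩ hSne
      exact hj (((hconn i j hAij).symm.trans hi))
    intro i
    exact (hS ▸ Set.mem_univ i : i ∈ {i | v i = v i₀})
  have hrow : ∀ i, ∑ k, A i k = μ := by
    intro i
    have h := congrFun hev i
    simp only [mulVec, dotProduct, Pi.smul_apply, smul_eq_mul] at h
    have h' : ∑ k, A i k * v k = (∑ k, A i k) * v i₀ := by
      rw [Finset.sum_mul]
      exact Finset.sum_congr rfl fun k _ => by rw [hconst k]
    rw [h', hconst i] at h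
    exact mul_right_cancel₀ hi₀' h
  intro i j
  rw [hrow i, hrow j]
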